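/- Let n ≥ 1 and let λ = (r₁ ≥ r₂ ≥ … ≥ r_m > 0) be a partition of 2n+1 in which every even number occurs with even multiplicity. Let O₀ = (2ⁿ,1) if n is even and O₀ = (2^{n−1},1,1,1) if n is odd, and let O₁ = (3,1^{2n−2}). Then the following are equivalent: (i) λ is not ≤ O₀ in the dominance order; (ii) r₁ ≥ 3; (iii) λ ≥ O₁ in the dominance order. In particular, every such partition that is greater than or incomparable to O₀ dominates (3,1^{2n−2}). -/

import Mathlib

lemma take_rep_sum (m c : ℕ) (t : List ℕ) (k : ℕ) :
    ((List.replicate m c ++ t).take k).sum = c * min k m + (t.take (k - m)).sum := by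
  rw [List.take_append, List.sum_append, List.take_replicate,
    List.sum_replicate, List.length_replicate, smul_eq_mul, Nat.mul_comm]

lemma len_le_sum (l : List ℕ) (h : ∀ x ∈ l, 0 < x) : l.length ≤ l.sum := by
  have := List.card_nsmul_le_sum l 1 (fun x hx => h x hx)
  simpa using this

lemma sum_le_len_add_count2 (l : List ℕ) (h : ∀ x ∈ l, x ≤ 2) :
    l.sum ≤ l.length + l.count 2 := by
  induction l with
  | nil => simp
  | cons a t ih =>
    have ha := h a (by simp)
    have ht := ih (fun x hx => h x (by simp [hx]))
    by_cases h2 : a = 2 <;> simp [List.count_cons, h2] <;> omega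

lemma count_mul_le_sum (l : List ℕ) (c : ℕ) : l.count c * c ≤ l.sum := by
  induction l with
  | nil => simp
  | cons a t ih =>
    by_cases h : a = c
    · subst h
      simp only [List.count_cons_self, List.sum_cons, add_mul, one_mul]
      omega
    · simp only [List.count_cons_of_ne h, List.sum_cons]
      omega

lemma take_cons_sum (a : ℕ) (t : List ℕ) (k : ℕ) :
    ((a :: t).take k).sum = a * min k 1 + (t.take (k - 1)).sum := by
  cases k with
  | zero => simp
  | succ j => simp [Nat.succ_min_succ]

lemma take_replicate_sum (m c k : ℕ) :
    ((List.replicate m c).take k).sum = c * min k m := by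
  rw [List.take_replicate, List.sum_replicate, smul_eq_mul, Nat.mul_comm]

lemma sum_take_le_sum (l : List ℕ) (k : ℕ) : (l.take k).sum ≤ l.sum := by
  have := congrArg List.sum (List.take_append_drop k l)
  rw [List.sum_append] at this
  omega

/-- Dominance order on partitions (written as lists, implicitly padded by zeros):
`Dominates r s` means `r ≥ s`, i.e. every partial sum of `r` is at least the
corresponding partial sum of `s`. -/
def Dominates (r s : List ℕ) : Prop :=
  ∀ k : ℕ, (s.take k).sum ≤ (r.take k).sum

theorem stmt_9 (n : ℕ) (hn : 1 ≤ n) (r : List ℕ)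
    (hsort : List.Pairwise (· ≥ ·) r) (hpos : ∀ x ∈ r, 0 < x)
    (hsum : r.sum = 2 * n + 1)
    (hmult : ∀ k : ℕ, Even k → Even (r.count k)) :
    let O0 : List ℕ := if Even n then List.replicate n 2 ++ [1]
      else List.replicate (n - 1) 2 ++ [1, 1, 1]
    let O1 : List ℕ := 3 :: List.replicate (2 * n - 2) 1
    (¬ Dominates O0 r ↔ 3 ≤ r.headI) ∧ (3 ≤ r.headI ↔ Dominates r O1) := by
  intro O0 O1
  obtain ⟨h, t, rfl⟩ : ∃ h t, r = h :: t := by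
    cases r with
    | nil => simp at hsum
    | cons h t => exact ⟨h, t, rfl⟩
  have hhead : (h :: t).headI = h := rfl
  have hsc := List.pairwise_cons.mp hsort
  have hall2 : 3 ≤ h ∨ ∀ x ∈ h :: t, x ≤ 2 := by
    rcases le_or_gt 3 h with h3 | h3
    · exact Or.inl h3
    · refine Or.inr fun x hx => ?_
      rcases List.mem_cons.mp hx with rfl | hx'
      · omega
      · have := hsc.1 x hx'; omega
  have htake1 : ((h :: t).take 1).sum = h := by simp
  -- O0 take sums
  have hO0 : ∀ k, (O0.take k).sum =
      if Even n then 2 * min k n + min (k - n) 1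
      else 2 * min k (n - 1) + min (k - (n - 1)) 3 := by
    intro k
    show ((if Even n then _ else _ : List ℕ).take k).sum = _
    split
    · have h1 : ([1] : List ℕ) = List.replicate 1 1 ++ [] := rfl
      rw [h1, take_rep_sum, take_rep_sum]
      simp
    · have h3 : ([1,1,1] : List ℕ) = List.replicate 3 1 ++ [] := rfl
      rw [h3, take_rep_sum, take_rep_sum]
      simp
  constructor
  · constructor
    · intro hnd
      rcases hall2 with h3 | hle2
      · exact h3
      exfalso; apply hnd
      intro k
      have b1 : ((h :: t).take k).sum ≤ 2 * k := by
        have := List.sum_le_card_nsmul ((h :: t).take k) 2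
          (fun x hx => hle2 x (List.take_subset _ _ hx))
        simp only [smul_eq_mul, List.length_take] at this
        omega
      have b2 : ((h :: t).take k).sum ≤ 2 * n + 1 := by
        have := sum_take_le_sum (h :: t) k; omega
      rw [hO0 k]
      split
      · omega
      · -- n odd case: use the even multiplicity of 2
        rename_i hne
        obtain ⟨p, hp⟩ := Nat.not_even_iff_odd.mp hne
        obtain ⟨m, hm⟩ := hmult 2 ⟨1, rfl⟩
        have hca : (h :: t).count 2 * 2 ≤ 2 * n + 1 := by
          have := count_mul_le_sum (h :: t) 2; omega
        have b3 : ((h :: t).take k).sum ≤ k + (h :: t).count 2 := by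
          have hc : ((h :: t).take k).count 2 ≤ (h :: t).count 2 :=
            (List.take_sublist k (h :: t)).count_le 2
          have hl : ((h :: t).take k).length ≤ k := by
            rw [List.length_take]; omega
          have := sum_le_len_add_count2 ((h :: t).take k)
            (fun x hx => hle2 x (List.take_subset _ _ hx))
          omega
        omega
    · intro h3 hd
      have := hd 1
      rw [htake1, hO0 1] at this
      split at this <;> omega
  · constructor
    · intro h3 k
      have hO1 : (O1.take k).sum = 3 * min k 1 + min (k - 1) (2 * n - 2) := by
        show (((3 : ℕ) :: List.replicate (2 * n - 2) 1).take k).sum = _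
        rw [take_cons_sum, take_replicate_sum]
        simp
      rw [hO1]
      rcases le_or_gt (h :: t).length k with hk | hk
      · rw [List.take_of_length_le hk, hsum]
        omega
      · cases k with
        | zero => simp
        | succ j =>
          simp only [List.take_succ_cons, List.sum_cons]
          have hts : min j t.length ≤ (t.take j).sum := by
            have := len_le_sum (t.take j) (fun x hx => hpos x (by
              exact List.mem_cons_of_mem h (List.take_subset _ _ hx)))
            rw [List.length_take] at this; omega
          simp only [List.length_cons] at hk
          omega
    · intro hd
      have := hd 1
      have hO1 : (O1.take 1).sum = 3 := by simp [O1]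
      rw [hO1, htake1] at this
      omega
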